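/- Let λ > 0, c > 0, t > 0. Then the integral over the open disk of radius ct centered at the origin in ℝ² of the function f(x) = (λ/(2πc)) · exp(-λt + (λ/c)√(c²t² - ‖x‖²)) / √(c²t² - ‖x‖²) equals 1 - e^{-λt}. -/

import Mathlib

open MeasureTheory Real Set

lemma oned_aux (lam c t : ℝ) (hlam : 0 < lam) (hc : 0 < c) (ht : 0 < t) :
    ∫ y in (0:ℝ)..(c*t),
        y * (Real.exp (-lam * t + (lam / c) * Real.sqrt (c ^ 2 * t ^ 2 - y ^ 2)) /
          Real.sqrt (c ^ 2 * t ^ 2 - y ^ 2))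
      = (c / lam) * (1 - Real.exp (-lam * t)) := by
  have hct : 0 < c * t := mul_pos hc ht
  set F : ℝ → ℝ := fun y =>
    -(c / lam) * Real.exp (-lam * t + (lam / c) * Real.sqrt (c ^ 2 * t ^ 2 - y ^ 2)) with hF
  set f' : ℝ → ℝ := fun y =>
    y * (Real.exp (-lam * t + (lam / c) * Real.sqrt (c ^ 2 * t ^ 2 - y ^ 2)) /
          Real.sqrt (c ^ 2 * t ^ 2 - y ^ 2)) with hf'
  have hder : ∀ y ∈ Ioo (0:ℝ) (c*t), HasDerivAt F (f' y) y := by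
    intro y hy
    have hy2 : 0 < c ^ 2 * t ^ 2 - y ^ 2 := by nlinarith [hy.1, hy.2]
    have hs : HasDerivAt (fun y : ℝ => c ^ 2 * t ^ 2 - y ^ 2) (-(2 * y)) y := by
      simpa using (hasDerivAt_pow 2 y).const_sub (c ^ 2 * t ^ 2)
    have hsq : HasDerivAt (fun y : ℝ => Real.sqrt (c ^ 2 * t ^ 2 - y ^ 2))
        (1 / (2 * Real.sqrt (c ^ 2 * t ^ 2 - y ^ 2)) * (-(2 * y))) y :=
      (Real.hasDerivAt_sqrt hy2.ne').comp y hs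
    have hexp := (((hsq.const_mul (lam / c)).const_add (-lam * t)).exp).const_mul (-(c / lam))
    convert hexp using 1
    have h0 : Real.sqrt (c ^ 2 * t ^ 2 - y ^ 2) ≠ 0 := (Real.sqrt_pos.mpr hy2).ne'
    show y * (Real.exp (-lam * t + lam / c * Real.sqrt (c ^ 2 * t ^ 2 - y ^ 2)) /
        Real.sqrt (c ^ 2 * t ^ 2 - y ^ 2)) = _
    generalize Real.exp (-lam * t + lam / c * Real.sqrt (c ^ 2 * t ^ 2 - y ^ 2)) = E
    generalize hs0 : Real.sqrt (c ^ 2 * t ^ 2 - y ^ 2) = s at *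
    field_simp
    all_goals rfl
  have hFcont : Continuous F := by fun_prop
  have hint : IntervalIntegrable f' volume 0 (c * t) := by
    apply intervalIntegral.intervalIntegrable_deriv_of_nonneg hFcont.continuousOn
    · intro y hy
      rw [min_eq_left hct.le, max_eq_right hct.le] at hy
      exact hder y hy
    · intro y hy
      rw [min_eq_left hct.le, max_eq_right hct.le] at hy
      exact mul_nonneg hy.1.le (div_nonneg (Real.exp_nonneg _) (Real.sqrt_nonneg _))
  have key := intervalIntegral.integral_eq_sub_of_hasDerivAt_of_tendsto hct hder hint
    ((hFcont.continuousAt.tendsto).mono_left nhdsWithin_le_nhds)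
    ((hFcont.continuousAt.tendsto).mono_left nhdsWithin_le_nhds)
  rw [key]
  have h1 : c ^ 2 * t ^ 2 - (c * t) ^ 2 = 0 := by ring
  have h2 : c ^ 2 * t ^ 2 - (0:ℝ) ^ 2 = (c * t) ^ 2 := by ring
  simp only [hF, h1, h2, Real.sqrt_zero, Real.sqrt_sq hct.le, mul_zero, add_zero]
  have h3 : -lam * t + lam / c * (c * t) = 0 := by field_simp; ring
  rw [h3, Real.exp_zero]
  ring

theorem stmt2 (lam c t : ℝ) (hlam : 0 < lam) (hc : 0 < c) (ht : 0 < t) :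
    ∫ x in {x : EuclideanSpace ℝ (Fin 2) | ‖x‖ < c * t},
        (lam / (2 * π * c)) *
          (Real.exp (-lam * t + (lam / c) * Real.sqrt (c ^ 2 * t ^ 2 - ‖x‖ ^ 2)) /
            Real.sqrt (c ^ 2 * t ^ 2 - ‖x‖ ^ 2))
      = 1 - Real.exp (-lam * t) := by
  have hct : 0 < c * t := mul_pos hc ht
  set g : ℝ → ℝ := fun r =>
    (lam / (2 * π * c)) *
      (Real.exp (-lam * t + (lam / c) * Real.sqrt (c ^ 2 * t ^ 2 - r ^ 2)) /
        Real.sqrt (c ^ 2 * t ^ 2 - r ^ 2)) with hg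
  have hset : {x : EuclideanSpace ℝ (Fin 2) | ‖x‖ < c * t} = Metric.ball 0 (c * t) := by
    ext x; simp [mem_ball_zero_iff]
  have h1 : (∫ x in {x : EuclideanSpace ℝ (Fin 2) | ‖x‖ < c * t}, g ‖x‖)
      = ∫ x : EuclideanSpace ℝ (Fin 2), (Iio (c * t)).indicator g ‖x‖ := by
    rw [← integral_indicator (hset ▸ Metric.isOpen_ball.measurableSet)]
    congr 1
  have h2 := MeasureTheory.integral_fun_norm_addHaar
    (volume : Measure (EuclideanSpace ℝ (Fin 2))) ((Iio (c * t)).indicator g)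
  rw [finrank_euclideanSpace_fin] at h2
  have hvol : (volume (Metric.ball (0 : EuclideanSpace ℝ (Fin 2)) 1)).toReal = π := by
    rw [EuclideanSpace.volume_ball]
    simp [Real.sq_sqrt Real.pi_pos.le, show (1:ℝ) + 1 = 2 from one_add_one_eq_two,
      Real.Gamma_two, ENNReal.toReal_ofReal Real.pi_pos.le]
  have h3 : (∫ y in Ioi (0:ℝ), y ^ (2 - 1) • (Iio (c * t)).indicator g y)
      = ∫ y in Ioo (0:ℝ) (c * t), y * g y := by
    have hptw : ∀ y : ℝ, y ^ (2 - 1) • (Iio (c * t)).indicator g y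
        = (Iio (c * t)).indicator (fun y => y * g y) y := by
      intro y
      by_cases hy : y ∈ Iio (c * t) <;> simp [Set.indicator_apply, hy]
    simp_rw [hptw]
    rw [setIntegral_indicator measurableSet_Iio, Ioi_inter_Iio]
  have h4 : (∫ y in Ioo (0:ℝ) (c * t), y * g y)
      = (lam / (2 * π * c)) * ((c / lam) * (1 - Real.exp (-lam * t))) := by
    have hpt : ∀ y : ℝ, y * g y = (lam / (2 * π * c)) *
        (y * (Real.exp (-lam * t + (lam / c) * Real.sqrt (c ^ 2 * t ^ 2 - y ^ 2)) /
          Real.sqrt (c ^ 2 * t ^ 2 - y ^ 2))) := by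
      intro y
      simp only [hg]
      ring
    simp_rw [hpt]
    rw [MeasureTheory.integral_const_mul, ← MeasureTheory.integral_Ioc_eq_integral_Ioo,
      ← intervalIntegral.integral_of_le hct.le, oned_aux lam c t hlam hc ht]
  show (∫ x in {x : EuclideanSpace ℝ (Fin 2) | ‖x‖ < c * t}, g ‖x‖) = 1 - Real.exp (-lam * t)
  calc (∫ x in {x : EuclideanSpace ℝ (Fin 2) | ‖x‖ < c * t}, g ‖x‖)
      = ∫ x : EuclideanSpace ℝ (Fin 2), (Iio (c * t)).indicator g ‖x‖ := h1
    _ = 2 • (volume (Metric.ball (0 : EuclideanSpace ℝ (Fin 2)) 1)).toReal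
          • ∫ y in Ioi (0:ℝ), y ^ (2 - 1) • (Iio (c * t)).indicator g y := h2
    _ = 1 - Real.exp (-lam * t) := by
        rw [hvol, h3, h4, nsmul_eq_mul, smul_eq_mul]
        field_simp <;> ring
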